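/- arXiv:2006.14562 — 2 statements merged into one kernel-verified Lean document; each statement's English description precedes it below -/
import Mathlib

section
/- Let h ≥ 2, let (W_i)_{i=0}^{h-1} be a partition of the nonnegative integers into nonempty pairwise disjoint sets, and let (g_i)_{i=0}^∞ be a G-adic sequence. Then the set A = ⋃_{i=0}^{h-1} A_G(W_i) is an asymptotic basis of order h, and its h-fold sumset is exactly the set of integers n with n ≥ h; that is, hA = {n ∈ ℕ₀ : n ≥ h}. -/
open Finset

/-- A `𝒢`-adic sequence: strictly increasing, `g 0 = 1`, and `g i ∣ g (i+1)` for all `i`. -/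
def GadicSeq (g : ℕ → ℕ) : Prop :=
  StrictMono g ∧ g 0 = 1 ∧ ∀ i, g i ∣ g (i + 1)

/-- The set `A_𝒢(W)` of positive integers `∑_{j ∈ F} x j * g j` with `F` a nonempty finite
subset of `W` and `x j ∈ [1, d_{j+1} - 1]` where `d_{j+1} = g (j+1) / g j`. -/
def AG (g : ℕ → ℕ) (W : Set ℕ) : Set ℕ :=
  { n | ∃ (F : Finset ℕ) (x : ℕ → ℕ), F.Nonempty ∧ ↑F ⊆ W ∧
        (∀ j ∈ F, 1 ≤ x j ∧ x j ≤ g (j + 1) / g j - 1) ∧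
        n = ∑ j ∈ F, x j * g j }

/-- `n` is a sum of `h` (not necessarily distinct) elements of `A`. -/
def IsSumOf (A : Set ℕ) (h n : ℕ) : Prop :=
  ∃ f : Fin h → ℕ, (∀ i, f i ∈ A) ∧ n = ∑ i, f i

/-- `A` is an asymptotic basis of order `h`. -/
def AsympBasis (h : ℕ) (A : Set ℕ) : Prop :=
  ∃ N, ∀ n ≥ N, IsSumOf A h n

/-- `A` is a minimal asymptotic basis of order `h`. -/
def MinAsympBasis (h : ℕ) (A : Set ℕ) : Prop :=
  AsympBasis h A ∧ ∀ B ⊂ A, ¬ AsympBasis h B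

section Aux

variable {g : ℕ → ℕ}

lemma g_one_le (hg : GadicSeq g) (j : ℕ) : 1 ≤ g j :=
  hg.2.1 ▸ hg.1.monotone (Nat.zero_le j)

lemma d_two_le (hg : GadicSeq g) (j : ℕ) : 2 ≤ g (j + 1) / g j := by
  have hpos : 0 < g j := g_one_le hg j
  have hdvd := hg.2.2 j
  have hlt : g j < g (j + 1) := hg.1 (Nat.lt_succ_self j)
  rcases hdvd with ⟨d, hd⟩
  have hdq : g (j + 1) / g j = d := by
    rw [hd, Nat.mul_div_cancel_left _ hpos]
  rw [hdq]
  by_contra hc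
  push_neg at hc
  interval_cases d <;> omega

lemma AG_pos (hg : GadicSeq g) {W : Set ℕ} {a : ℕ} (ha : a ∈ AG g W) : 1 ≤ a := by
  obtain ⟨F, x, hF, -, hx, rfl⟩ := ha
  obtain ⟨j, hj⟩ := hF
  have hx1 := (hx j hj).1
  have hg1 := g_one_le hg j
  have h1 : 1 ≤ x j * g j :=
    Nat.one_le_iff_ne_zero.mpr (Nat.mul_ne_zero (by omega) (by omega))
  exact le_trans h1 (Finset.single_le_sum (f := fun j => x j * g j) (fun i _ => Nat.zero_le _) hj)

/-- Splitting lemma: any element `a ≥ 2` of `A` splits as `b + c` with `b, c ∈ A`. -/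
lemma split_lemma (hg : GadicSeq g) {h : ℕ} (W : Fin h → Set ℕ)
    (hW : ∀ j : ℕ, ∃ i, j ∈ W i) {a : ℕ}
    (ha : a ∈ ⋃ i, AG g (W i)) (h2 : 2 ≤ a) :
    ∃ b c, b ∈ (⋃ i, AG g (W i)) ∧ c ∈ (⋃ i, AG g (W i)) ∧ a = b + c := by
  rw [Set.mem_iUnion] at ha
  obtain ⟨i, F, x, hF, hFW, hx, rfl⟩ := ha
  obtain ⟨j, hj⟩ := hF
  by_cases herase : (F.erase j).Nonempty
  · -- split off the single term j
    refine ⟨x j * g j, ∑ k ∈ F.erase j, x k * g k, ?_, ?_, ?_⟩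
    · rw [Set.mem_iUnion]
      refine ⟨i, {j}, x, Finset.singleton_nonempty j, ?_, ?_, by simp⟩
      · intro y hy
        rw [Finset.coe_singleton, Set.mem_singleton_iff] at hy
        exact hy ▸ hFW hj
      · intro k hk
        rw [Finset.mem_singleton] at hk
        exact hk ▸ hx j hj
    · rw [Set.mem_iUnion]
      exact ⟨i, F.erase j, x, herase, fun k hk => hFW (Finset.erase_subset j F hk),
        fun k hk => hx k (Finset.erase_subset j F hk), rfl⟩
    · rw [← Finset.add_sum_erase _ _ hj]
  · -- F = {j}
    have hFj : F = {j} := by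
      apply Finset.eq_singleton_iff_unique_mem.mpr
      refine ⟨hj, fun y hy => ?_⟩
      by_contra hne
      exact herase ⟨y, Finset.mem_erase.mpr ⟨hne, hy⟩⟩
    subst hFj
    simp only [Finset.sum_singleton] at h2 ⊢
    have hxb := hx j (Finset.mem_singleton_self j)
    have hdj := d_two_le hg j
    by_cases hxj : 2 ≤ x j
    · -- split the coefficient
      refine ⟨1 * g j, (x j - 1) * g j, ?_, ?_, ?_⟩
      · rw [Set.mem_iUnion]
        refine ⟨i, {j}, fun _ => 1, Finset.singleton_nonempty j, hFW, ?_, by simp⟩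
        intro k hk
        rw [Finset.mem_singleton] at hk
        rw [hk]
        show 1 ≤ 1 ∧ 1 ≤ g (j + 1) / g j - 1
        omega
      · rw [Set.mem_iUnion]
        refine ⟨i, {j}, fun _ => x j - 1, Finset.singleton_nonempty j, hFW, ?_, by simp⟩
        intro k hk
        rw [Finset.mem_singleton] at hk
        rw [hk]
        show 1 ≤ x j - 1 ∧ x j - 1 ≤ g (j + 1) / g j - 1
        omega
      · have hxx : 1 + (x j - 1) = x j := by omega
        rw [← add_mul, hxx]
    · -- x j = 1, so a = g j ≥ 2, hence j ≥ 1
      have hx1 : x j = 1 := by omega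
      rw [hx1, one_mul] at h2 ⊢
      have hj1 : 1 ≤ j := by
        by_contra hc
        push_neg at hc
        interval_cases j
        · rw [hg.2.1] at h2; omega
      obtain ⟨m, hm⟩ : ∃ m, j = m + 1 := ⟨j - 1, by omega⟩
      subst hm
      obtain ⟨i', hi'⟩ := hW m
      have hd : 2 ≤ g (m + 1) / g m := d_two_le hg m
      have hmul : (g (m + 1) / g m) * g m = g (m + 1) :=
        Nat.div_mul_cancel (hg.2.2 m)
      have hsub : (↑({m} : Finset ℕ) : Set ℕ) ⊆ W i' := by
        intro y hy
        rw [Finset.coe_singleton, Set.mem_singleton_iff] at hy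
        exact hy ▸ hi'
      refine ⟨(g (m + 1) / g m - 1) * g m, 1 * g m, ?_, ?_, ?_⟩
      · rw [Set.mem_iUnion]
        refine ⟨i', {m}, fun _ => g (m + 1) / g m - 1, Finset.singleton_nonempty m,
          hsub, ?_, by simp⟩
        intro k hk
        rw [Finset.mem_singleton] at hk
        rw [hk]
        show 1 ≤ g (m + 1) / g m - 1 ∧ g (m + 1) / g m - 1 ≤ g (m + 1) / g m - 1
        omega
      · rw [Set.mem_iUnion]
        refine ⟨i', {m}, fun _ => 1, Finset.singleton_nonempty m, hsub, ?_, by simp⟩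
        intro k hk
        rw [Finset.mem_singleton] at hk
        rw [hk]
        show 1 ≤ 1 ∧ 1 ≤ g (m + 1) / g m - 1
        omega
      · rw [← add_mul]
        have : g (m + 1) / g m - 1 + 1 = g (m + 1) / g m := by omega
        rw [this, hmul]

/-- G-adic representation of a positive integer. -/
lemma rep_lemma (hg : GadicSeq g) : ∀ n, 1 ≤ n →
    ∃ (F : Finset ℕ) (x : ℕ → ℕ), F.Nonempty ∧
      (∀ j ∈ F, 1 ≤ x j ∧ x j ≤ g (j + 1) / g j - 1) ∧
      (∀ j ∈ F, g j ≤ n) ∧ n = ∑ j ∈ F, x j * g j := by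
  intro n
  induction n using Nat.strong_induction_on with
  | _ n ih =>
  intro hn
  -- Let J be the largest index with g J ≤ n
  have hg0 : g 0 ≤ n := by rw [hg.2.1]; exact hn
  set J := Nat.findGreatest (fun j => g j ≤ n) n with hJ
  have hJle : g J ≤ n := Nat.findGreatest_spec (P := fun j => g j ≤ n) (Nat.zero_le n) hg0
  have hJpos : 0 < g J := g_one_le hg J
  have hnlt : n < g (J + 1) := by
    by_cases hc : J + 1 ≤ n
    · by_contra hcc
      push_neg at hcc
      exact Nat.findGreatest_is_greatest (Nat.lt_succ_self J) hc hcc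
    · push_neg at hc
      have h1 : n + 1 ≤ g (n + 1) := hg.1.le_apply
      have h2 : g (n + 1) ≤ g (J + 1) := hg.1.monotone (by omega)
      omega
  set d := g (J + 1) / g J with hd
  have hmul : d * g J = g (J + 1) := Nat.div_mul_cancel (hg.2.2 J)
  set q := n / g J with hq
  set r := n % g J with hr
  have hq1 : 1 ≤ q := Nat.one_le_div_iff hJpos |>.mpr hJle
  have hqd : q ≤ d - 1 := by
    have : q < d := by
      rw [hq, Nat.div_lt_iff_lt_mul hJpos]
      omega
    omega
  have hrn : g J * q + r = n := Nat.div_add_mod n (g J)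
  have hrn' : q * g J + r = n := by rw [Nat.mul_comm]; exact hrn
  have hrlt : r < g J := Nat.mod_lt _ hJpos
  by_cases hr0 : r = 0
  · refine ⟨{J}, fun _ => q, Finset.singleton_nonempty J,
      fun k hk => by simp at hk; subst hk; exact ⟨hq1, hqd⟩,
      fun k hk => by simp at hk; subst hk; exact hJle, ?_⟩
    simp only [Finset.sum_singleton]
    show n = q * g J
    omega
  · have hr1 : 1 ≤ r := by omega
    have hrsmall : r < n := by omega
    obtain ⟨F', x', hF', hx', hle', hsum'⟩ := ih r hrsmall hr1
    have hJnot : J ∉ F' := by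
      intro hmem
      have := hle' J hmem
      omega
    refine ⟨insert J F', Function.update x' J q, Finset.insert_nonempty _ _, ?_, ?_, ?_⟩
    · intro k hk
      rcases Finset.mem_insert.mp hk with rfl | hk'
      · rw [Function.update_self]; exact ⟨hq1, hqd⟩
      · rw [Function.update_of_ne (by rintro rfl; exact hJnot hk')]
        exact hx' k hk'
    · intro k hk
      rcases Finset.mem_insert.mp hk with rfl | hk'
      · exact hJle
      · exact le_trans (hle' k hk') (le_of_lt hrsmall)
    · rw [Finset.sum_insert hJnot, Function.update_self]
      have : ∑ j ∈ F', Function.update x' J q j * g j = ∑ j ∈ F', x' j * g j := by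
        apply Finset.sum_congr rfl
        intro k hk
        rw [Function.update_of_ne (by rintro rfl; exact hJnot hk)]
      rw [this, ← hsum']
      omega

/-- A sum of `k` elements of `A`, as a multiset. -/
def SumOfCard (A : Set ℕ) (k n : ℕ) : Prop :=
  ∃ M : Multiset ℕ, Multiset.card M = k ∧ (∀ a ∈ M, a ∈ A) ∧ M.sum = n

lemma sumOfCard_step (hg : GadicSeq g) {h : ℕ} (W : Fin h → Set ℕ)
    (hW : ∀ j : ℕ, ∃ i, j ∈ W i) {k n : ℕ}
    (hs : SumOfCard (⋃ i, AG g (W i)) k n) (hkn : k < n) :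
    SumOfCard (⋃ i, AG g (W i)) (k + 1) n := by
  obtain ⟨M, hcard, hmem, hsum⟩ := hs
  have hex : ∃ a ∈ M, 2 ≤ a := by
    by_contra hc
    push_neg at hc
    have hone : ∀ a ∈ M, a = 1 := by
      intro a ha
      have h1 : 1 ≤ a := by
        have := hmem a ha
        rw [Set.mem_iUnion] at this
        obtain ⟨i, hi⟩ := this
        exact AG_pos hg hi
      have := hc a ha
      omega
    have hM1 : M = Multiset.replicate (Multiset.card M) 1 :=
      Multiset.eq_replicate_card.mpr hone
    have : M.sum = Multiset.card M := by
      conv_lhs => rw [hM1]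
      simp
    omega
  obtain ⟨a, haM, ha2⟩ := hex
  obtain ⟨b, c, hb, hc, habc⟩ := split_lemma hg W hW (hmem a haM) ha2
  refine ⟨b ::ₘ c ::ₘ M.erase a, ?_, ?_, ?_⟩
  · have hpos : 0 < Multiset.card M := Multiset.card_pos_iff_exists_mem.mpr ⟨a, haM⟩
    simp only [Multiset.card_cons, Multiset.card_erase_of_mem haM, Nat.pred_eq_sub_one]
    omega
  · intro y hy
    simp only [Multiset.mem_cons] at hy
    rcases hy with rfl | rfl | hy
    · exact hb
    · exact hc
    · exact hmem y (Multiset.mem_of_mem_erase hy)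
  · rw [Multiset.sum_cons, Multiset.sum_cons, ← add_assoc, ← habc]
    have hthis : a + (M.erase a).sum = M.sum := by
      conv_rhs => rw [← Multiset.cons_erase haM]
      rw [Multiset.sum_cons]
    rw [hthis, hsum]

lemma sumOfCard_pad (hg : GadicSeq g) {h : ℕ} (W : Fin h → Set ℕ)
    (hW : ∀ j : ℕ, ∃ i, j ∈ W i) {n : ℕ} (hn : h ≤ n) :
    ∀ m k, k + m = h → SumOfCard (⋃ i, AG g (W i)) k n →
      SumOfCard (⋃ i, AG g (W i)) h n := by
  intro m
  induction m with
  | zero =>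
    intro k hk hs
    have hkh : k = h := by omega
    subst hkh
    exact hs
  | succ m ihm =>
    intro k hk hs
    have hkh : k < h := by omega
    have : SumOfCard (⋃ i, AG g (W i)) (k + 1) n :=
      sumOfCard_step hg W hW hs (by omega)
    exact ihm (k + 1) (by omega) this

end Aux

theorem gadic_asymptotic_basis (h : ℕ) (hh : 2 ≤ h) (g : ℕ → ℕ) (hg : GadicSeq g)
    (W : Fin h → Set ℕ) (hW1 : ∀ i, (W i).Nonempty)
    (hW2 : ∀ i j, i ≠ j → Disjoint (W i) (W j))
    (hW3 : ⋃ i, W i = Set.univ) :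
    AsympBasis h (⋃ i, AG g (W i)) ∧
      {n : ℕ | IsSumOf (⋃ i, AG g (W i)) h n} = {n : ℕ | h ≤ n} := by
  have hW : ∀ j : ℕ, ∃ i, j ∈ W i := by
    intro j
    have : j ∈ ⋃ i, W i := hW3 ▸ Set.mem_univ j
    exact Set.mem_iUnion.mp this
  set A := ⋃ i, AG g (W i) with hA
  -- forward direction : IsSumOf → h ≤ n
  have hfwd : ∀ n, IsSumOf A h n → h ≤ n := by
    intro n ⟨f, hf, hsum⟩
    have h1 : ∀ i, 1 ≤ f i := by
      intro i
      have := hf i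
      rw [hA, Set.mem_iUnion] at this
      obtain ⟨j, hj⟩ := this
      exact AG_pos hg hj
    calc h = ∑ _i : Fin h, 1 := by simp
      _ ≤ ∑ i, f i := Finset.sum_le_sum fun i _ => h1 i
      _ = n := hsum.symm
  -- backward : h ≤ n → IsSumOf
  have hbwd : ∀ n, h ≤ n → IsSumOf A h n := by
    intro n hn
    have hn1 : 1 ≤ n := by omega
    obtain ⟨F, x, hF, hx, hle, hsum⟩ := rep_lemma hg n hn1
    -- color function
    choose C hC using hW
    -- group by color
    set S : Finset (Fin h) := F.image C with hS
    have hgroup : ∑ i ∈ S, ∑ j ∈ F.filter (fun j => C j = i), x j * g j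
        = ∑ j ∈ F, x j * g j :=
      Finset.sum_fiberwise_of_maps_to (fun j hj => Finset.mem_image_of_mem C hj) _
    -- initial multiset
    have hinit : SumOfCard A S.card n := by
      refine ⟨S.val.map (fun i => ∑ j ∈ F.filter (fun j => C j = i), x j * g j), by simp, ?_, ?_⟩
      · intro a ha
        rw [Multiset.mem_map] at ha
        obtain ⟨i, hiS, rfl⟩ := ha
        rw [hA, Set.mem_iUnion]
        refine ⟨i, F.filter (fun j => C j = i), x, ?_, ?_, ?_, rfl⟩
        · rw [Finset.mem_val, hS, Finset.mem_image] at hiS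
          obtain ⟨j, hjF, hji⟩ := hiS
          exact ⟨j, Finset.mem_filter.mpr ⟨hjF, hji⟩⟩
        · intro j hj
          rw [Finset.mem_coe, Finset.mem_filter] at hj
          rw [← hj.2]
          exact hC j
        · intro j hj
          exact hx j (Finset.mem_filter.mp hj).1
      · rw [hsum, ← hgroup]
        rfl
    have hcard : S.card ≤ h := le_trans (Finset.card_le_univ S) (by simp)
    have hfin : SumOfCard A h n :=
      sumOfCard_pad hg W (fun j => ⟨C j, hC j⟩) hn (h - S.card) S.card (by omega) hinit
    -- convert multiset to Fin h function
    obtain ⟨M, hMcard, hMmem, hMsum⟩ := hfin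
    set l := M.toList with hl
    have hlen : l.length = h := by rw [hl, Multiset.length_toList, hMcard]
    refine ⟨fun i => l.get (Fin.cast hlen.symm i), fun i => ?_, ?_⟩
    · apply hMmem
      rw [← Multiset.mem_toList]
      exact l.get_mem _
    · rw [← hMsum, ← Multiset.sum_toList, ← hl]
      rw [← Fin.sum_univ_getElem l]
      exact Fintype.sum_equiv (finCongr hlen.symm) _ _ (fun i => rfl) |>.symm
  refine ⟨⟨h, fun n hn => hbwd n hn⟩, ?_⟩
  ext n
  simp only [Set.mem_setOf_eq]
  exact ⟨hfwd n, hbwd n⟩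
end

section
/- Let h ≥ 2 and let t be an integer with t ≥ 1 + (log h)/(log 2). Let (W_i)_{i=0}^{h-1} be a partition of the nonnegative integers into nonempty pairwise disjoint sets such that for each i ∈ [0, h−1] there is an infinite set M_i of positive integers with the property that the interval [M − t + 1, M] is contained in W_i for every M ∈ M_i. Let (g_i)_{i=0}^∞ be a G-adic sequence and let A = ⋃_{i=0}^{h-1} A_G(W_i). Then for every a ∈ A there are infinitely many positive integers n that cannot be written as a sum of h elements of A \ {a}; in particular, A \ {a} is not an asymptotic basis of order h. -/
open Finset

section core
variable {g : ℕ → ℕ}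

lemma gpos (hg : GadicSeq g) (i : ℕ) : 0 < g i := by
  have h0 : g 0 = 1 := hg.2.1
  have := hg.1.monotone (Nat.zero_le i)
  omega

lemma gdvd (hg : GadicSeq g) {i j : ℕ} (hij : i ≤ j) : g i ∣ g j := by
  induction j with
  | zero => simpa [Nat.le_zero.mp hij] using dvd_refl _
  | succ k ih =>
    rcases Nat.lt_or_ge i (k+1) with hl | hge
    · exact (ih (by omega)).trans (hg.2.2 k)
    · have : i = k + 1 := by omega
      subst this; exact dvd_refl _

lemma gstep (hg : GadicSeq g) (i : ℕ) : 2 * g i ≤ g (i + 1) := by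
  obtain ⟨c, hc⟩ := hg.2.2 i
  have h1 : g i < g (i+1) := hg.1 (by omega)
  have h2 : 0 < g i := gpos hg i
  rcases Nat.lt_or_ge c 2 with hc2 | hc2
  · interval_cases c <;> omega
  · calc 2 * g i ≤ c * g i := by exact Nat.mul_le_mul_right _ hc2
    _ = g (i+1) := by rw [hc, mul_comm]

lemma gratio (hg : GadicSeq g) (i k : ℕ) : 2 ^ k * g i ≤ g (i + k) := by
  induction k with
  | zero => simp
  | succ m ih =>
    have := gstep hg (i + m)
    calc 2 ^ (m+1) * g i = 2 * (2 ^ m * g i) := by ring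
    _ ≤ 2 * g (i + m) := by omega
    _ ≤ g (i + m + 1) := this

lemma dval (hg : GadicSeq g) (p : ℕ) : g (p+1) / g p * g p = g (p+1) :=
  Nat.div_mul_cancel (hg.2.2 p)

lemma dge2 (hg : GadicSeq g) (p : ℕ) : 2 ≤ g (p+1) / g p := by
  have h1 := gstep hg p
  have h2 := gpos hg p
  have h3 := dval hg p
  nlinarith [Nat.lt_irrefl 0]

/-- sum of maximal digits below P -/
lemma sum_full (hg : GadicSeq g) (P : ℕ) :
    ∑ p ∈ range P, (g (p+1) / g p - 1) * g p = g P - 1 := by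
  induction P with
  | zero => simp [hg.2.1]
  | succ Q ih =>
    rw [Finset.sum_range_succ, ih]
    have h3 := dval hg Q
    have h2 := gpos hg Q
    have h4 := dge2 hg Q
    have h1 : g Q ≤ g (Q + 1) := le_of_lt (hg.1 (by omega))
    have : (g (Q+1) / g Q - 1) * g Q = g (Q+1) - g Q := by
      rw [Nat.sub_mul, h3, one_mul]
    omega

/-- value bound: if all positions < P then value < g P. -/
lemma V_lt (hg : GadicSeq g) (F : Finset ℕ) (x : ℕ → ℕ)
    (hx : ∀ j ∈ F, x j ≤ g (j+1) / g j - 1) (hP : ∀ j ∈ F, j < P) :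
    ∑ j ∈ F, x j * g j ≤ g P - 1 := by
  calc ∑ j ∈ F, x j * g j ≤ ∑ j ∈ F, (g (j+1) / g j - 1) * g j :=
        Finset.sum_le_sum (fun j hj => Nat.mul_le_mul_right _ (hx j hj))
  _ ≤ ∑ p ∈ range P, (g (p+1) / g p - 1) * g p :=
        Finset.sum_le_sum_of_subset (fun j hj => Finset.mem_range.mpr (hP j hj))
  _ = g P - 1 := sum_full hg P

lemma sum_Icc_max (hg : GadicSeq g) {L K : ℕ} (hLK : L ≤ K + 1) :
    ∑ p ∈ Finset.Icc L K, (g (p+1) / g p - 1) * g p = g (K+1) - g L := by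
  have h1 : ∑ p ∈ range L, (g (p+1)/g p - 1) * g p + ∑ p ∈ Ico L (K+1), (g (p+1)/g p -1) * g p
      = ∑ p ∈ range (K+1), (g (p+1)/g p -1) * g p := Finset.sum_range_add_sum_Ico _ hLK
  rw [sum_full hg, sum_full hg] at h1
  have h2 : Finset.Icc L K = Finset.Ico L (K+1) := by
    ext p; simp [Nat.lt_succ_iff]
  have h3 := gpos hg L
  have h4 : g L ≤ g (K+1) := hg.1.monotone (by omega)
  rw [h2]
  omega

/-- mod of a valid digit sum cuts the support -/
lemma V_mod (hg : GadicSeq g) (F : Finset ℕ) (x : ℕ → ℕ)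
    (hx : ∀ j ∈ F, x j ≤ g (j+1) / g j - 1) (C : ℕ) :
    (∑ j ∈ F, x j * g j) % g C = ∑ j ∈ F.filter (· < C), x j * g j := by
  classical
  have hsplit : ∑ j ∈ F, x j * g j
      = ∑ j ∈ F.filter (· < C), x j * g j + ∑ j ∈ F.filter (¬ · < C), x j * g j :=
    (Finset.sum_filter_add_sum_filter_not F _ _).symm
  have hdvd : g C ∣ ∑ j ∈ F.filter (¬ · < C), x j * g j := by
    refine Finset.dvd_sum (fun j hj => ?_)
    have hjC : C ≤ j := by simpa using (Finset.mem_filter.mp hj).2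
    exact Dvd.dvd.mul_left (gdvd hg hjC) _
  have hlt : ∑ j ∈ F.filter (· < C), x j * g j < g C := by
    have := V_lt hg (F.filter (· < C)) x
      (fun j hj => hx j (Finset.mem_filter.mp hj).1)
      (fun j hj => by simpa using (Finset.mem_filter.mp hj).2)
    have := gpos hg C
    omega
  obtain ⟨c, hc⟩ := hdvd
  rw [hsplit, hc, Nat.add_mul_mod_self_left, Nat.mod_eq_of_lt hlt]

/-- digit extraction -/
lemma dig_eq (hg : GadicSeq g) (F : Finset ℕ) (x : ℕ → ℕ)
    (hx : ∀ j ∈ F, 1 ≤ x j ∧ x j ≤ g (j+1) / g j - 1) (p : ℕ) :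
    (∑ j ∈ F, x j * g j) / g p % (g (p+1) / g p) = if p ∈ F then x p else 0 := by
  classical
  set d := g (p+1) / g p with hd
  have hd2 : 2 ≤ d := dge2 hg p
  have hdv : d * g p = g (p+1) := dval hg p
  -- split F into < p, = p, > p
  have hsplit : ∑ j ∈ F, x j * g j
      = ∑ j ∈ F.filter (· < p+1), x j * g j + ∑ j ∈ F.filter (¬ · < p+1), x j * g j :=
    (Finset.sum_filter_add_sum_filter_not F _ _).symm
  have hsplit2 : ∑ j ∈ F.filter (· < p+1), x j * g j
      = ∑ j ∈ F.filter (· < p), x j * g j + (if p ∈ F then x p else 0) * g p := by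
    rcases Classical.em (p ∈ F) with hp | hp
    · rw [if_pos hp]
      have : F.filter (· < p+1) = insert p (F.filter (· < p)) := by
        ext j
        simp only [Finset.mem_insert, Finset.mem_filter]
        constructor
        · rintro ⟨hj, hlt⟩
          rcases Nat.lt_or_ge j p with h | h
          · exact Or.inr ⟨hj, h⟩
          · exact Or.inl (by omega)
        · rintro (rfl | ⟨hj, hlt⟩)
          · exact ⟨hp, by omega⟩
          · exact ⟨hj, by omega⟩
      rw [this, Finset.sum_insert (by simp), add_comm]
    · rw [if_neg hp]
      have : F.filter (· < p+1) = F.filter (· < p) := by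
        ext j
        simp only [Finset.mem_filter]
        constructor
        · rintro ⟨hj, hlt⟩
          refine ⟨hj, ?_⟩
          rcases Nat.lt_or_ge j p with h | h
          · exact h
          · exfalso; have : j = p := by omega
            exact hp (this ▸ hj)
        · rintro ⟨hj, hlt⟩; exact ⟨hj, by omega⟩
      rw [this]; omega
  -- high part divisible by g (p+1)
  have hdvd : g (p+1) ∣ ∑ j ∈ F.filter (¬ · < p+1), x j * g j := by
    refine Finset.dvd_sum (fun j hj => ?_)
    have hjC : p + 1 ≤ j := by simpa using (Finset.mem_filter.mp hj).2
    exact Dvd.dvd.mul_left (gdvd hg hjC) _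
  obtain ⟨c, hc⟩ := hdvd
  have hlow : ∑ j ∈ F.filter (· < p), x j * g j < g p := by
    have := V_lt hg (F.filter (· < p)) x
      (fun j hj => (hx j (Finset.mem_filter.mp hj).1).2)
      (fun j hj => by simpa using (Finset.mem_filter.mp hj).2)
    have := gpos hg p
    omega
  set xp := if p ∈ F then x p else 0 with hxp
  have hxpd : xp < d := by
    rcases Classical.em (p ∈ F) with hp | hp
    · simp only [hxp, if_pos hp]; have := (hx p hp).2; omega
    · simp only [hxp, if_neg hp]; omega
  have : ∑ j ∈ F, x j * g j
      = ∑ j ∈ F.filter (· < p), x j * g j + g p * (xp + d * c) := by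
    rw [hsplit, hsplit2, hc, ← hdv]; ring
  rw [this]
  have hgp := gpos hg p
  rw [Nat.add_mul_div_left _ _ hgp, Nat.div_eq_of_lt hlow, zero_add,
    Nat.add_mul_mod_self_left, Nat.mod_eq_of_lt hxpd]

end core

section part2
variable {g : ℕ → ℕ}

/-- uniqueness of G-adic representations -/
lemma V_inj (hg : GadicSeq g) {F F' : Finset ℕ} {x x' : ℕ → ℕ}
    (hx : ∀ j ∈ F, 1 ≤ x j ∧ x j ≤ g (j+1) / g j - 1)
    (hx' : ∀ j ∈ F', 1 ≤ x' j ∧ x' j ≤ g (j+1) / g j - 1)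
    (heq : ∑ j ∈ F, x j * g j = ∑ j ∈ F', x' j * g j) :
    F = F' ∧ ∀ p ∈ F, x p = x' p := by
  have key : ∀ p, (if p ∈ F then x p else 0) = (if p ∈ F' then x' p else 0) := by
    intro p
    rw [← dig_eq hg F x hx p, ← dig_eq hg F' x' hx' p, heq]
  have hFF : F = F' := by
    ext p
    have := key p
    constructor
    · intro hp
      by_contra hp'
      rw [if_pos hp, if_neg hp'] at this
      have := (hx p hp).1; omega
    · intro hp
      by_contra hp'
      rw [if_neg hp', if_pos hp] at this
      have := (hx' p hp).1; omega
  refine ⟨hFF, fun p hp => ?_⟩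
  have := key p
  rw [if_pos hp, if_pos (hFF ▸ hp)] at this
  exact this

/-- fiber counting: if c : Fin h → Fin h misses i0 but hits every other value,
    every fiber has at most 2 elements -/
lemma fiber_le_two {h : ℕ} (hh : 2 ≤ h) (c : Fin h → Fin h) (i0 : Fin h)
    (hmiss : ∀ j, c j ≠ i0) (hhit : ∀ v, v ≠ i0 → ∃ j, c j = v) (b : Fin h) :
    (Finset.univ.filter (fun j => c j = b)).card ≤ 2 := by
  classical
  by_cases hb : b = i0
  · have : Finset.univ.filter (fun j => c j = b) = ∅ := by
      ext j; simp only [Finset.mem_filter, Finset.mem_univ, true_and, Finset.notMem_empty,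
        iff_false]
      rw [hb]; exact hmiss j
    simp [this]
  · -- total = h, fibers over ((univ.erase i0).erase b) each ≥ 1
    have htot : ∑ v ∈ Finset.univ, (Finset.univ.filter (fun j => c j = v)).card
        = (Finset.univ : Finset (Fin h)).card :=
      (Finset.card_eq_sum_card_fiberwise (fun j _ => Finset.mem_univ (c j))).symm
    have hcard : ((Finset.univ.erase i0).erase b).card = h - 2 := by
      rw [Finset.card_erase_of_mem (Finset.mem_erase.mpr ⟨hb, Finset.mem_univ b⟩),
        Finset.card_erase_of_mem (Finset.mem_univ i0), Finset.card_univ, Fintype.card_fin]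
      omega
    have hsub : insert b ((Finset.univ.erase i0).erase b) ⊆ Finset.univ := by
      intro v _; exact Finset.mem_univ v
    have hge1 : ∀ v ∈ (Finset.univ.erase i0).erase b,
        1 ≤ (Finset.univ.filter (fun j => c j = v)).card := by
      intro v hv
      have hvne : v ≠ i0 := (Finset.mem_erase.mp (Finset.mem_erase.mp hv).2).1
      obtain ⟨j, hj⟩ := hhit v hvne
      exact Finset.card_pos.mpr ⟨j, Finset.mem_filter.mpr ⟨Finset.mem_univ j, hj⟩⟩
    have h1 : ∑ v ∈ insert b ((Finset.univ.erase i0).erase b),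
        (Finset.univ.filter (fun j => c j = v)).card
        ≤ ∑ v ∈ Finset.univ, (Finset.univ.filter (fun j => c j = v)).card :=
      Finset.sum_le_sum_of_subset hsub
    rw [Finset.sum_insert (by simp)] at h1
    have h2 : ((Finset.univ.erase i0).erase b).card
        ≤ ∑ v ∈ (Finset.univ.erase i0).erase b, (Finset.univ.filter (fun j => c j = v)).card := by
      calc ((Finset.univ.erase i0).erase b).card
          = ∑ _v ∈ (Finset.univ.erase i0).erase b, 1 := by simp
      _ ≤ _ := Finset.sum_le_sum hge1
    rw [htot] at h1
    have h3 : (Finset.univ : Finset (Fin h)).card = h := by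
      rw [Finset.card_univ, Fintype.card_fin]
    omega

end part2

section part3

lemma tower {h : ℕ} (t : ℕ) (W : Fin h → Set ℕ)
    (hM : ∀ i, ∃ Mi : Set ℕ, Mi.Infinite ∧ ∀ M ∈ Mi, 0 < M ∧ Set.Icc (M + 1 - t) M ⊆ W i)
    (ι : ℕ → Fin h) (base : ℕ) (M : ℕ) :
    ∃ K L : ℕ → ℕ, ∀ m, m < M →
      (Set.Icc (L m) (K m) ⊆ W (ι m)) ∧ (L m + t = K m + 1) ∧ base ≤ L m ∧
      ∀ m', m' < m → K m' + 1 ≤ L m := by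
  induction M with
  | zero => exact ⟨id, id, fun m hm => absurd hm (Nat.not_lt_zero m)⟩
  | succ M ih =>
    obtain ⟨K, L, hKL⟩ := ih
    obtain ⟨Mi, hMi_inf, hMi⟩ := hM (ι M)
    set X := base + (Finset.range M).sup (fun m' => K m' + 1) + t + 2 with hX
    obtain ⟨Knew, hKnewMi, hKnewX⟩ := hMi_inf.exists_gt X
    obtain ⟨-, hKnewW⟩ := hMi Knew hKnewMi
    refine ⟨fun m => if m = M then Knew else K m, fun m => if m = M then Knew + 1 - t else L m,
      fun m hm => ?_⟩
    rcases Nat.lt_or_ge m M with hmM | hmM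
    · have hne : m ≠ M := by omega
      simp only [if_neg hne]
      obtain ⟨h1, h2, h3, h4⟩ := hKL m hmM
      refine ⟨h1, h2, h3, fun m' hm' => ?_⟩
      have hne' : m' ≠ M := by omega
      simp only [if_neg hne']
      exact h4 m' hm'
    · have heq : m = M := by omega
      subst heq
      simp only [eq_self_iff_true, if_true]
      have htK : t + 2 ≤ Knew := by omega
      refine ⟨hKnewW, by omega, by omega, fun m' hm' => ?_⟩
      have hne' : m' ≠ m := by omega
      simp only [if_neg hne']
      have : K m' + 1 ≤ (Finset.range m).sup (fun m' => K m' + 1) :=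
        Finset.le_sup (f := fun m' => K m' + 1) (Finset.mem_range.mpr hm')
      omega

end part3

section part4

lemma norep {h t : ℕ} {g : ℕ → ℕ} (hg : GadicSeq g) (hh : 2 ≤ h)
    (hpow : h ≤ 2 ^ (t - 1)) (ht2 : 2 ≤ t)
    (W : Fin h → Set ℕ) [∀ v : Fin h, DecidablePred (· ∈ W v)]
    (hW2 : ∀ i j, i ≠ j → Disjoint (W i) (W j))
    (hW3 : ⋃ i, W i = Set.univ)
    (i0 : Fin h) (F : Finset ℕ) (x : ℕ → ℕ) (hFne : F.Nonempty) (hFW : ↑F ⊆ W i0)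
    (hxb : ∀ j ∈ F, 1 ≤ x j ∧ x j ≤ g (j + 1) / g j - 1)
    (ι : ℕ → Fin h) (hι_ne : ∀ m, m < h - 1 → ι m ≠ i0)
    (hι_surj : ∀ v, v ≠ i0 → ∃ m, m < h - 1 ∧ ι m = v)
    (K L : ℕ → ℕ)
    (hwin : ∀ m, m < h - 1 → Set.Icc (L m) (K m) ⊆ W (ι m))
    (hLt : ∀ m, m < h - 1 → L m + t = K m + 1)
    (hbase : ∀ m, m < h - 1 → F.max' hFne + 2 ≤ L m)
    (hsep : ∀ m, m < h - 1 → ∀ m', m' < m → K m' + 1 ≤ L m)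
    (a P n : ℕ)
    (ha : a = ∑ j ∈ F, x j * g j)
    (hP : P = ∑ p ∈ (Finset.range (F.min' hFne)).filter (fun p => p ∉ W i0),
            (g (p + 1) / g p - 1) * g p)
    (hn : n = a + P + ∑ m ∈ Finset.range (h - 1), (g (K m + 1) - g (L m)))
    (f : Fin h → ℕ)
    (hfmem : ∀ j, f j ∈ ⋃ i, AG g (W i))
    (hfsum : n = ∑ j, f j) :
    ∃ j, f j = a := by
  set p0 := F.min' hFne with hp0
  set fs := F.max' hFne with hfs
  set B : ℕ → ℕ := fun m => g (K m + 1) - g (L m) with hB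
  have hp0F : p0 ∈ F := F.min'_mem hFne
  have hfsF : fs ∈ F := F.max'_mem hFne
  have hp0fs : p0 ≤ fs := F.min'_le fs hfsF
  have hgpos := gpos hg
  have hgmono := hg.1
  have hLK : ∀ m, m < h - 1 → L m ≤ K m := fun m hm => by have := hLt m hm; omega
  have hgLK : ∀ m, m < h - 1 → 2 ^ t * g (L m) ≤ g (K m + 1) := fun m hm => by
    have h1 := gratio hg (L m) t
    rw [hLt m hm] at h1; exact h1
  -- extract summand data
  have hfmem' : ∀ j, ∃ i, f j ∈ AG g (W i) := fun j => Set.mem_iUnion.mp (hfmem j)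
  choose c hc using hfmem'
  have hc' : ∀ j, ∃ (Fj : Finset ℕ) (xj : ℕ → ℕ), Fj.Nonempty ∧ ↑Fj ⊆ W (c j) ∧
      (∀ p ∈ Fj, 1 ≤ xj p ∧ xj p ≤ g (p + 1) / g p - 1) ∧ f j = ∑ p ∈ Fj, xj p * g p :=
    fun j => hc j
  choose FF xx hFFne hFFW hxxb hval using hc'
  have hcell_unique : ∀ (p : ℕ) (v w : Fin h), p ∈ W v → p ∈ W w → v = w := by
    intro p v w hv hw
    by_contra hne
    exact (hW2 v w hne).le_bot ⟨hv, hw⟩ |>.elim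
  -- a and P bounds
  have ha_lt : a ≤ g (fs + 1) - 1 := by
    rw [ha]
    exact V_lt hg F x (fun j hj => (hxb j hj).2) (fun j hj => by
      have := F.le_max' j hj; omega)
  have hP_le : P ≤ g p0 - 1 := by
    rw [hP]
    calc (∑ p ∈ (Finset.range p0).filter (fun p => p ∉ W i0), (g (p + 1) / g p - 1) * g p)
        ≤ ∑ p ∈ Finset.range p0, (g (p + 1) / g p - 1) * g p :=
          Finset.sum_le_sum_of_subset (Finset.filter_subset _ _)
    _ = g p0 - 1 := sum_full hg p0
  -- partial sums bound
  have hs : ∀ m, m < h - 1 → a + P + ∑ l ∈ Finset.range m, B l < g (L m) := by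
    intro m
    induction m with
    | zero =>
      intro hm
      have h1 : 2 * g (fs + 1) ≤ g (fs + 2) := gstep hg (fs + 1)
      have h2 : g (fs + 2) ≤ g (L 0) := hgmono.monotone (hbase 0 hm)
      have h3 : g p0 ≤ g (fs + 1) := hgmono.monotone (by omega)
      have h4 := hgpos p0
      rw [Finset.range_zero, Finset.sum_empty, add_zero]
      omega
    | succ m ih =>
      intro hm
      have hm' : m < h - 1 := by omega
      have ihm := ih hm'
      rw [Finset.sum_range_succ]
      have h1 : g (K m + 1) ≤ g (L (m + 1)) := hgmono.monotone (hsep (m+1) hm m (by omega))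
      have h2 : g (L m) ≤ g (K m + 1) := hgmono.monotone (by have := hLK m hm'; omega)
      have h3 : B m = g (K m + 1) - g (L m) := rfl
      omega
  -- n mod at window m
  have hmod : ∀ m, m < h - 1 →
      n % g (K m + 1) = a + P + ∑ l ∈ Finset.range m, B l + B m := by
    intro m hm
    have hsplit : ∑ l ∈ Finset.range (h - 1), B l
        = ∑ l ∈ Finset.range (m + 1), B l + ∑ l ∈ Finset.Ico (m + 1) (h - 1), B l :=
      (Finset.sum_range_add_sum_Ico _ (by omega)).symm
    have hdvd : g (K m + 1) ∣ ∑ l ∈ Finset.Ico (m + 1) (h - 1), B l := by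
      refine Finset.dvd_sum fun l hl => ?_
      have hl1 : m + 1 ≤ l ∧ l < h - 1 := by simpa using hl
      have hKL1 : K m + 1 ≤ L l := hsep l hl1.2 m (by omega)
      exact Nat.dvd_sub (gdvd hg (by have := hLK l hl1.2; omega)) (gdvd hg hKL1)
    obtain ⟨e, he⟩ := hdvd
    have hlt : a + P + ∑ l ∈ Finset.range m, B l + B m < g (K m + 1) := by
      have h1 := hs m hm
      have h2 : g (L m) ≤ g (K m + 1) := hgmono.monotone (by have := hLK m hm; omega)
      have h3 : B m = g (K m + 1) - g (L m) := rfl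
      omega
    have hneq : n = (a + P + ∑ l ∈ Finset.range m, B l + B m) + g (K m + 1) * e := by
      rw [hn, hsplit, he, Finset.sum_range_succ]
      ring
    rw [hneq, Nat.add_mul_mod_self_left, Nat.mod_eq_of_lt hlt]
  -- each window is hit
  have hS : ∀ m, m < h - 1 → ∃ j p, p ∈ FF j ∧ L m ≤ p ∧ p ≤ K m := by
    intro m hm
    by_contra hcon
    push_neg at hcon
    have hterm : ∀ j, f j % g (K m + 1) ≤ g (L m) - 1 := by
      intro j
      rw [hval j, V_mod hg (FF j) (xx j) (fun p hp => (hxxb j p hp).2)]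
      refine V_lt hg _ _ (fun p hp => (hxxb j p (Finset.mem_filter.mp hp).1).2)
        (fun p hp => ?_)
      obtain ⟨hp1, hp2⟩ := Finset.mem_filter.mp hp
      have := hcon j p hp1
      have hp2' : p < K m + 1 := by simpa using hp2
      omega
    have hX : (∑ j, f j % g (K m + 1)) ≤ h * (g (L m) - 1) := by
      calc (∑ j : Fin h, f j % g (K m + 1)) ≤ ∑ _j : Fin h, (g (L m) - 1) :=
            Finset.sum_le_sum fun j _ => hterm j
      _ = h * (g (L m) - 1) := by
          rw [Finset.sum_const, Finset.card_univ, Fintype.card_fin, smul_eq_mul]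
    have hA1 : h * g (L m) ≤ 2 ^ (t - 1) * g (L m) := Nat.mul_le_mul_right _ hpow
    have hA2 : h * (g (L m) - 1) + h = h * g (L m) := by
      have h0 := hgpos (L m)
      have h2 : h * 1 ≤ h * g (L m) := Nat.mul_le_mul_left _ h0
      have h3 := Nat.mul_sub h (g (L m)) 1
      omega
    have hA3 : 2 ^ t * g (L m) = 2 * (2 ^ (t - 1) * g (L m)) := by
      have h230 : 2 ^ (t-1) * 2 = 2 ^ t := by
        rw [← pow_succ]; congr 1; omega
      rw [← h230]; ring
    have hA4 := hgLK m hm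
    have hA5 : 1 * g (L m) ≤ 2 ^ (t-1) * g (L m) :=
      Nat.mul_le_mul_right _ Nat.one_le_two_pow
    have hXlt : (∑ j, f j % g (K m + 1)) < g (K m + 1) := by omega
    have hXmod : n % g (K m + 1) = (∑ j, f j % g (K m + 1)) % g (K m + 1) := by
      rw [hfsum]; exact Finset.sum_nat_mod _ _ _
    have hXn : (∑ j, f j % g (K m + 1)) = n % g (K m + 1) := by
      rw [hXmod, Nat.mod_eq_of_lt hXlt]
    rw [hmod m hm] at hXn
    have hBm : B m = g (K m + 1) - g (L m) := rfl
    have hgLKm : g (L m) ≤ g (K m + 1) := hgmono.monotone (by have := hLK m hm; omega)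
    omega
  -- window summand cells
  have hcell : ∀ m, m < h - 1 → ∃ j, c j = ι m := by
    intro m hm
    obtain ⟨j, p, hpF, hp1, hp2⟩ := hS m hm
    exact ⟨j, hcell_unique p (c j) (ι m) (hFFW j hpF) (hwin m hm ⟨hp1, hp2⟩)⟩
  by_cases hcase : ∃ j, c j = i0
  · -- CASE (i): some summand lives in cell i0
    obtain ⟨τ, hτ⟩ := hcase
    have csurj : Function.Surjective c := by
      intro v
      by_cases hv : v = i0
      · exact ⟨τ, by rw [hτ, hv]⟩
      · obtain ⟨m, hm, hιm⟩ := hι_surj v hv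
        obtain ⟨j, hj⟩ := hcell m hm
        exact ⟨j, by rw [hj, hιm]⟩
    have cinj : Function.Injective c := Finite.injective_iff_surjective.mpr csurj
    have hdisjF : ∀ j j' : Fin h, j ≠ j' → Disjoint (FF j) (FF j') := by
      intro j j' hne
      rw [Finset.disjoint_left]
      intro p hp hp'
      exact hne (cinj (hcell_unique p (c j) (c j') (hFFW j hp) (hFFW j' hp')))
    set Fhat := Finset.univ.biUnion FF with hFhat
    set xhat : ℕ → ℕ := fun p => ∑ j, if p ∈ FF j then xx j p else 0 with hxhat
    have hxhat_eq : ∀ j : Fin h, ∀ p ∈ FF j, xhat p = xx j p := by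
      intro j p hp
      rw [hxhat]
      simp only
      rw [Fintype.sum_eq_single j (fun j' hj' => ?_), if_pos hp]
      rw [if_neg]
      intro hp'
      exact hj' (cinj (hcell_unique p (c j') (c j) (hFFW j' hp') (hFFW j hp)))
    have hVhat : ∑ p ∈ Fhat, xhat p * g p = n := by
      rw [hFhat, Finset.sum_biUnion (fun j _ j' _ hne => hdisjF j j' hne)]
      calc ∑ j, ∑ p ∈ FF j, xhat p * g p
          = ∑ j, ∑ p ∈ FF j, xx j p * g p :=
            Finset.sum_congr rfl fun j _ => Finset.sum_congr rfl fun p hp => by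
              rw [hxhat_eq j p hp]
      _ = ∑ j, f j := Finset.sum_congr rfl fun j _ => (hval j).symm
      _ = n := hfsum.symm
    have hxhatb : ∀ p ∈ Fhat, 1 ≤ xhat p ∧ xhat p ≤ g (p+1) / g p - 1 := by
      intro p hp
      obtain ⟨j, _, hj⟩ := Finset.mem_biUnion.mp hp
      rw [hxhat_eq j p hj]
      exact hxxb j p hj
    -- canonical representation of n
    set padF := (Finset.range p0).filter (fun p => p ∉ W i0) with hpadF
    set winF := (Finset.range (h-1)).biUnion (fun m => Finset.Icc (L m) (K m)) with hwinF
    set FnC := (F ∪ padF) ∪ winF with hFnC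
    set xnC : ℕ → ℕ := fun p => if p ∈ F then x p else g (p+1) / g p - 1 with hxnC
    have hpadlt : ∀ p ∈ padF, p < p0 := fun p hp =>
      Finset.mem_range.mp (Finset.mem_filter.mp hp).1
    have hpadni0 : ∀ p ∈ padF, p ∉ W i0 := fun p hp => (Finset.mem_filter.mp hp).2
    have hpadnF : ∀ p ∈ padF, p ∉ F := by
      intro p hp hpF
      have := F.min'_le p hpF
      have := hpadlt p hp
      omega
    have hFpad : Disjoint F padF := by
      rw [Finset.disjoint_right]
      exact hpadnF
    have hwinge : ∀ p ∈ winF, fs + 2 ≤ p := by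
      intro p hp
      obtain ⟨m, hm, hpm⟩ := Finset.mem_biUnion.mp hp
      have hm' := Finset.mem_range.mp hm
      have h1 := (Finset.mem_Icc.mp hpm).1
      have h2 := hbase m hm'
      omega
    have hwinnF : ∀ p ∈ winF, p ∉ F := by
      intro p hp hpF
      have := F.le_max' p hpF
      have := hwinge p hp
      omega
    have hFpadwin : Disjoint (F ∪ padF) winF := by
      rw [Finset.disjoint_left]
      intro p hpF hpwin
      have h2 := hwinge p hpwin
      rcases Finset.mem_union.mp hpF with h1 | h1
      · have := F.le_max' p h1; omega
      · have := hpadlt p h1; omega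
    have hwd : (↑(Finset.range (h-1)) : Set ℕ).PairwiseDisjoint
        (fun m => Finset.Icc (L m) (K m)) := by
      intro m hm m' hm' hne
      have hmr : m < h - 1 := by simpa using hm
      have hmr' : m' < h - 1 := by simpa using hm'
      rw [Function.onFun, Finset.disjoint_left]
      intro p hp hp'
      have h1 := Finset.mem_Icc.mp hp
      have h2 := Finset.mem_Icc.mp hp'
      rcases Nat.lt_or_ge m m' with hlt | hge
      · have := hsep m' hmr' m hlt; omega
      · have hlt : m' < m := by omega
        have := hsep m hmr m' hlt; omega
    have hVnC : ∑ p ∈ FnC, xnC p * g p = n := by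
      rw [hFnC, Finset.sum_union hFpadwin, Finset.sum_union hFpad]
      have e1 : ∑ p ∈ F, xnC p * g p = a := by
        rw [ha]
        exact Finset.sum_congr rfl fun p hp => by rw [hxnC]; simp only [if_pos hp]
      have e2 : ∑ p ∈ padF, xnC p * g p = P := by
        rw [hP]
        exact Finset.sum_congr rfl fun p hp => by
          rw [hxnC]; simp only [if_neg (hpadnF p hp)]
      have e3 : ∑ p ∈ winF, xnC p * g p = ∑ m ∈ Finset.range (h-1), B m := by
        rw [hwinF, Finset.sum_biUnion hwd]
        refine Finset.sum_congr rfl fun m hm => ?_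
        have hm' := Finset.mem_range.mp hm
        have : ∑ p ∈ Finset.Icc (L m) (K m), xnC p * g p
            = ∑ p ∈ Finset.Icc (L m) (K m), (g (p+1) / g p - 1) * g p := by
          refine Finset.sum_congr rfl fun p hp => ?_
          have hpw : p ∈ winF := by
            rw [hwinF]
            exact Finset.mem_biUnion.mpr ⟨m, hm, hp⟩
          rw [hxnC]; simp only [if_neg (hwinnF p hpw)]
        rw [this, sum_Icc_max hg (by have := hLK m hm'; omega)]
      rw [e1, e2, e3, hn]
    have hxnCb : ∀ p ∈ FnC, 1 ≤ xnC p ∧ xnC p ≤ g (p+1) / g p - 1 := by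
      intro p _
      rw [hxnC]
      by_cases hpF : p ∈ F
      · simp only [if_pos hpF]
        exact hxb p hpF
      · simp only [if_neg hpF]
        have := dge2 hg p
        omega
    obtain ⟨hFeq, hxeq⟩ := V_inj hg hxhatb hxnCb (hVhat.trans hVnC.symm)
    have hFFτ_sub : ∀ p ∈ FF τ, p ∈ F := by
      intro p hp
      have hpW : p ∈ W i0 := by rw [← hτ]; exact hFFW τ hp
      have hpFhat : p ∈ Fhat := Finset.mem_biUnion.mpr ⟨τ, Finset.mem_univ τ, hp⟩
      rw [hFeq] at hpFhat
      rcases Finset.mem_union.mp hpFhat with h12 | hwin'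
      · rcases Finset.mem_union.mp h12 with hF1 | hpad
        · exact hF1
        · exact absurd hpW (hpadni0 p hpad)
      · obtain ⟨m, hm, hpm⟩ := Finset.mem_biUnion.mp hwin'
        have hm' := Finset.mem_range.mp hm
        have hpWm : p ∈ W (ι m) := hwin m hm' (by
          have := Finset.mem_Icc.mp hpm
          exact ⟨this.1, this.2⟩)
        exact absurd (hcell_unique p (ι m) i0 hpWm hpW) (hι_ne m hm')
    have hFFτ : FF τ = F := by
      ext p
      constructor
      · exact hFFτ_sub p
      · intro hp
        have hpFn : p ∈ FnC := by
          rw [hFnC]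
          exact Finset.mem_union.mpr (Or.inl (Finset.mem_union.mpr (Or.inl hp)))
        rw [← hFeq] at hpFn
        obtain ⟨j, _, hj⟩ := Finset.mem_biUnion.mp hpFn
        have hcj : c j = i0 := hcell_unique p (c j) i0 (hFFW j hj) (hFW hp)
        have : j = τ := cinj (by rw [hcj, hτ])
        exact this ▸ hj
    refine ⟨τ, ?_⟩
    rw [hval τ, hFFτ, ha]
    refine Finset.sum_congr rfl fun p hp => ?_
    have hpFFτ : p ∈ FF τ := by rw [hFFτ]; exact hp
    have h1 : xx τ p = xhat p := (hxhat_eq τ p hpFFτ).symm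
    have h2 : xhat p = xnC p :=
      hxeq p (Finset.mem_biUnion.mpr ⟨τ, Finset.mem_univ τ, hpFFτ⟩)
    have h3 : xnC p = x p := by rw [hxnC]; simp only [if_pos hp]
    rw [h1, h2, h3]
  · -- CASE (ii): no summand lives in cell i0 — derive a contradiction
    exfalso
    push_neg at hcase
    set mv : Fin h → ℕ :=
      fun v => ∑ p ∈ (Finset.range p0).filter (fun p => p ∈ W v),
        (g (p+1) / g p - 1) * g p with hmv
    have hterm2 : ∀ j, f j % g (p0 + 1) ≤ mv (c j) := by
      intro j
      rw [hval j, V_mod hg (FF j) (xx j) (fun p hp => (hxxb j p hp).2)]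
      have hsub : (FF j).filter (· < p0 + 1)
          ⊆ (Finset.range p0).filter (fun p => p ∈ W (c j)) := by
        intro p hp
        obtain ⟨hp1, hp2⟩ := Finset.mem_filter.mp hp
        have hp2' : p < p0 + 1 := by simpa using hp2
        have hpW : p ∈ W (c j) := hFFW j hp1
        have hpne : p ≠ p0 := by
          intro he
          exact hcase j (hcell_unique p (c j) i0 hpW (he ▸ hFW hp0F))
        exact Finset.mem_filter.mpr ⟨Finset.mem_range.mpr (by omega), hpW⟩
      calc ∑ p ∈ (FF j).filter (· < p0 + 1), xx j p * g p
          ≤ ∑ p ∈ (FF j).filter (· < p0 + 1), (g (p+1) / g p - 1) * g p :=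
            Finset.sum_le_sum fun p hp =>
              Nat.mul_le_mul_right _ ((hxxb j p (Finset.mem_filter.mp hp).1).2)
      _ ≤ mv (c j) := Finset.sum_le_sum_of_subset hsub
    have hmvsum : ∑ v ∈ Finset.univ.erase i0, mv v = P := by
      have e1 : ∀ v, mv v
          = ∑ p ∈ Finset.range p0, if p ∈ W v then (g (p+1) / g p - 1) * g p else 0 :=
        fun v => by rw [hmv]; exact Finset.sum_filter _ _
      have e2 : P = ∑ p ∈ Finset.range p0,
          if p ∉ W i0 then (g (p+1) / g p - 1) * g p else 0 := by
        rw [hP]; exact Finset.sum_filter _ _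
      rw [e2]
      calc ∑ v ∈ Finset.univ.erase i0, mv v
          = ∑ v ∈ Finset.univ.erase i0, ∑ p ∈ Finset.range p0,
              if p ∈ W v then (g (p+1) / g p - 1) * g p else 0 :=
            Finset.sum_congr rfl fun v _ => e1 v
      _ = ∑ p ∈ Finset.range p0, ∑ v ∈ Finset.univ.erase i0,
              if p ∈ W v then (g (p+1) / g p - 1) * g p else 0 := Finset.sum_comm
      _ = ∑ p ∈ Finset.range p0,
              if p ∉ W i0 then (g (p+1) / g p - 1) * g p else 0 := by
            refine Finset.sum_congr rfl fun p _ => ?_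
            by_cases hpi0 : p ∈ W i0
            · rw [if_neg (by simpa using hpi0)]
              refine Finset.sum_eq_zero fun v hv => ?_
              refine if_neg fun hpv => ?_
              exact (Finset.mem_erase.mp hv).1 (hcell_unique p v i0 hpv hpi0)
            · have hpcov : p ∈ ⋃ i, W i := by rw [hW3]; trivial
              obtain ⟨v', hv'⟩ := Set.mem_iUnion.mp hpcov
              have hvne : v' ≠ i0 := fun he => hpi0 (he ▸ hv')
              rw [if_pos hpi0]
              rw [Finset.sum_eq_single_of_mem v'
                (Finset.mem_erase.mpr ⟨hvne, Finset.mem_univ v'⟩)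
                (fun w _ hwne => if_neg fun hpw => hwne (hcell_unique p w v' hpw hv'))]
              exact if_pos hv'
    have hhit : ∀ v, v ≠ i0 → ∃ j, c j = v := by
      intro v hv
      obtain ⟨m, hm, hιm⟩ := hι_surj v hv
      obtain ⟨j, hj⟩ := hcell m hm
      exact ⟨j, by rw [hj, hιm]⟩
    have hsum_mv : (∑ j, mv (c j)) ≤ 2 * P := by
      rw [← hmvsum]
      calc (∑ j, mv (c j))
          = ∑ b ∈ Finset.univ.image c,
              (Finset.univ.filter (fun j => c j = b)).card • mv b := Finset.sum_comp mv c
      _ ≤ ∑ b ∈ Finset.univ.image c, 2 * mv b := by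
            refine Finset.sum_le_sum fun b _ => ?_
            rw [smul_eq_mul]
            exact Nat.mul_le_mul_right _ (fiber_le_two hh c i0 hcase hhit b)
      _ ≤ ∑ b ∈ Finset.univ.erase i0, 2 * mv b := by
            refine Finset.sum_le_sum_of_subset_of_nonneg ?_ (fun _ _ _ => Nat.zero_le _)
            intro b hb
            obtain ⟨j, _, hj⟩ := Finset.mem_image.mp hb
            exact Finset.mem_erase.mpr ⟨hj ▸ hcase j, Finset.mem_univ b⟩
      _ = 2 * ∑ b ∈ Finset.univ.erase i0, mv b := (Finset.mul_sum _ _ _).symm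
    -- n mod g (p0+1)
    have hHi : g (p0 + 1) ∣ ∑ p ∈ F.erase p0, x p * g p := by
      refine Finset.dvd_sum fun p hp => ?_
      obtain ⟨hpne, hpF⟩ := Finset.mem_erase.mp hp
      have : p0 ≤ p := F.min'_le p hpF
      exact Dvd.dvd.mul_left (gdvd hg (by omega)) _
    have haeq : a = x p0 * g p0 + ∑ p ∈ F.erase p0, x p * g p := by
      rw [ha, ← Finset.add_sum_erase F _ hp0F]
    have hdvdB : g (p0 + 1) ∣ ∑ m ∈ Finset.range (h-1), B m := by
      refine Finset.dvd_sum fun m hm => ?_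
      have hm' := Finset.mem_range.mp hm
      have hb := hbase m hm'
      have hk := hLK m hm'
      exact Nat.dvd_sub (gdvd hg (by omega)) (gdvd hg (by omega))
    have hdx : x p0 ≤ g (p0+1) / g p0 - 1 := (hxb p0 hp0F).2
    have hdxl : 1 ≤ x p0 := (hxb p0 hp0F).1
    have hval0 : x p0 * g p0 + P < g (p0 + 1) := by
      have h1 := dval hg p0
      have h2 := dge2 hg p0
      have h3 := hgpos p0
      have h4 : x p0 * g p0 ≤ (g (p0+1) / g p0 - 1) * g p0 := Nat.mul_le_mul_right _ hdx
      have h5 : (g (p0+1) / g p0 - 1) * g p0 = g (p0+1) - g p0 := by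
        rw [Nat.sub_mul, h1, one_mul]
      have h6 : x p0 * g p0 + P ≤ (g (p0+1) - g p0) + (g p0 - 1) :=
        add_le_add (h5 ▸ h4) hP_le
      have h7 : g p0 ≤ g (p0+1) := hgmono.monotone (by omega)
      omega
    have hnmod : n % g (p0 + 1) = x p0 * g p0 + P := by
      obtain ⟨e1, he1⟩ := hHi
      obtain ⟨e2, he2⟩ := hdvdB
      have hneq : n = (x p0 * g p0 + P) + g (p0 + 1) * (e1 + e2) := by
        rw [hn, haeq, he1, he2]; ring
      rw [hneq, Nat.add_mul_mod_self_left, Nat.mod_eq_of_lt hval0]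
    have hgstep0 := gstep hg p0
    have hgp00 := hgpos p0
    have hXle : (∑ j, f j % g (p0 + 1)) ≤ 2 * P :=
      le_trans (Finset.sum_le_sum fun j _ => hterm2 j) hsum_mv
    have hXlt : (∑ j, f j % g (p0 + 1)) < g (p0 + 1) := by omega
    have hXmod : n % g (p0 + 1) = (∑ j, f j % g (p0 + 1)) % g (p0 + 1) := by
      rw [hfsum]; exact Finset.sum_nat_mod _ _ _
    have hXeq : (∑ j, f j % g (p0 + 1)) = x p0 * g p0 + P := by
      rw [← hnmod, hXmod, Nat.mod_eq_of_lt hXlt]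
    have hfin : g p0 ≤ x p0 * g p0 := Nat.le_mul_of_pos_left _ hdxl
    have c1 : x p0 * g p0 + P ≤ 2 * P := by rw [← hXeq]; exact hXle
    clear hXle hXeq hXmod hXlt hnmod hmvsum hsum_mv hterm2
    omega

end part4

theorem gadic_remove_element_destroys_basis (h t : ℕ) (hh : 2 ≤ h)
    (ht : (1 : ℝ) + Real.log h / Real.log 2 ≤ t)
    (W : Fin h → Set ℕ) (hW1 : ∀ i, (W i).Nonempty)
    (hW2 : ∀ i j, i ≠ j → Disjoint (W i) (W j))
    (hW3 : ⋃ i, W i = Set.univ)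
    (hM : ∀ i, ∃ Mi : Set ℕ, Mi.Infinite ∧
      ∀ M ∈ Mi, 0 < M ∧ Set.Icc (M + 1 - t) M ⊆ W i)
    (g : ℕ → ℕ) (hg : GadicSeq g) :
    ∀ a ∈ ⋃ i, AG g (W i),
      {n : ℕ | 0 < n ∧ ¬ IsSumOf ((⋃ i, AG g (W i)) \ {a}) h n}.Infinite ∧
        ¬ AsympBasis h ((⋃ i, AG g (W i)) \ {a}) := by

  intro a ha
  classical
  -- derive 2 ≤ t and h ≤ 2 ^ (t - 1) from the logarithmic hypothesis
  have h2R : (0:ℝ) < Real.log 2 := Real.log_pos (by norm_num)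
  have hhR : (2:ℝ) ≤ (h:ℝ) := by exact_mod_cast hh
  have hlogh : Real.log 2 ≤ Real.log h := Real.log_le_log (by norm_num) hhR
  have ht2 : 2 ≤ t := by
    have h1 : (1:ℝ) ≤ Real.log h / Real.log 2 := (one_le_div h2R).mpr hlogh
    have h2 : (2:ℝ) ≤ (t:ℝ) := by linarith
    exact_mod_cast h2
  have hpow : h ≤ 2 ^ (t - 1) := by
    have h1 : Real.log h / Real.log 2 ≤ (t:ℝ) - 1 := by linarith
    have h2 : Real.log h ≤ ((t:ℝ) - 1) * Real.log 2 := (div_le_iff₀ h2R).mp h1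
    have h3 : ((t:ℝ) - 1) = ((t - 1 : ℕ) : ℝ) := by
      have : (1:ℝ) ≤ (t:ℝ) := by exact_mod_cast (by omega : 1 ≤ t)
      push_cast [Nat.cast_sub (by omega : 1 ≤ t)]
      ring
    have h4 : Real.log h ≤ Real.log (2 ^ (t - 1)) := by
      rw [Real.log_pow]
      rw [h3] at h2
      exact_mod_cast h2
    have h5 : (h:ℝ) ≤ (2:ℝ) ^ (t - 1) := by
      have hpos : (0:ℝ) < (h:ℝ) := by linarith
      have hpos2 : (0:ℝ) < (2:ℝ) ^ (t - 1) := by positivity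
      exact (Real.log_le_log_iff hpos hpos2).mp h4
    exact_mod_cast h5
  -- unpack a
  rw [Set.mem_iUnion] at ha
  obtain ⟨i0, hai0⟩ := ha
  obtain ⟨F, x, hFne, hFW, hxb, haval⟩ := hai0
  have hgpos := gpos hg
  have hgmono := hg.1
  -- the key existence statement
  have key : ∀ N : ℕ, ∃ n : ℕ, N < n ∧
      ¬ IsSumOf ((⋃ i, AG g (W i)) \ {a}) h n := by
    intro N
    -- enumeration of the other cells
    set l := (Finset.univ.erase i0).toList with hl
    have hlen : l.length = h - 1 := by
      rw [hl, Finset.length_toList, Finset.card_erase_of_mem (Finset.mem_univ _),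
        Finset.card_univ, Fintype.card_fin]
    set ι : ℕ → Fin h := fun m => l.getD m i0 with hι
    have hι_mem : ∀ m, m < h - 1 → ι m ∈ l := by
      intro m hm
      rw [hι]
      simp only
      rw [List.getD_eq_getElem l i0 (by omega)]
      exact List.getElem_mem _
    have hι_ne : ∀ m, m < h - 1 → ι m ≠ i0 := by
      intro m hm
      have := hι_mem m hm
      rw [hl, Finset.mem_toList, Finset.mem_erase] at this
      exact this.1
    have hι_surj : ∀ v, v ≠ i0 → ∃ m, m < h - 1 ∧ ι m = v := by
      intro v hv
      have hvl : v ∈ l := by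
        rw [hl, Finset.mem_toList, Finset.mem_erase]
        exact ⟨hv, Finset.mem_univ v⟩
      obtain ⟨m, hm, he⟩ := List.mem_iff_getElem.mp hvl
      refine ⟨m, by omega, ?_⟩
      rw [hι]
      simp only
      rw [List.getD_eq_getElem l i0 hm]
      exact he
    -- tower of windows
    set fs := F.max' hFne with hfs
    set base := max (fs + 2) (N + 1) with hbase_def
    obtain ⟨K, L, hKL⟩ := tower t W hM ι base (h - 1)
    have hwin : ∀ m, m < h - 1 → Set.Icc (L m) (K m) ⊆ W (ι m) := fun m hm => (hKL m hm).1
    have hLt : ∀ m, m < h - 1 → L m + t = K m + 1 := fun m hm => (hKL m hm).2.1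
    have hbase : ∀ m, m < h - 1 → fs + 2 ≤ L m := fun m hm =>
      le_trans (le_max_left _ _) (hKL m hm).2.2.1
    have hbaseN : ∀ m, m < h - 1 → N + 1 ≤ L m := fun m hm =>
      le_trans (le_max_right _ _) (hKL m hm).2.2.1
    have hsep : ∀ m, m < h - 1 → ∀ m', m' < m → K m' + 1 ≤ L m := fun m hm m' hm' =>
      (hKL m hm).2.2.2 m' hm'
    -- the constructed witness
    set P := ∑ p ∈ (Finset.range (F.min' hFne)).filter (fun p => p ∉ W i0),
      (g (p + 1) / g p - 1) * g p with hP
    set n := a + P + ∑ m ∈ Finset.range (h - 1), (g (K m + 1) - g (L m)) with hn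
    have h0h : 0 < h - 1 := by omega
    have hNn : N < n := by
      have h1 : 2 ^ t * g (L 0) ≤ g (K 0 + 1) := by
        have := gratio hg (L 0) t
        rw [hLt 0 h0h] at this
        exact this
      have h2 : g (L 0) ≤ 2 ^ t * g (L 0) := by
        have : 1 * g (L 0) ≤ 2 ^ t * g (L 0) :=
          Nat.mul_le_mul_right _ (Nat.one_le_two_pow)
        omega
      have h25 : 2 * g (L 0) ≤ 2 ^ t * g (L 0) := by
        have h26 : 2 ≤ 2 ^ t := by
          calc 2 = 2^1 := (pow_one 2).symm
          _ ≤ 2^t := Nat.pow_le_pow_right (by norm_num) (by omega)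
        exact Nat.mul_le_mul_right _ h26
      have h3 : L 0 ≤ g (L 0) := hgmono.le_apply
      have h4 : N + 1 ≤ L 0 := hbaseN 0 h0h
      have h5 : g (K 0 + 1) - g (L 0) ≤ ∑ m ∈ Finset.range (h - 1), (g (K m + 1) - g (L m)) :=
        Finset.single_le_sum (f := fun m => g (K m + 1) - g (L m))
          (fun m _ => Nat.zero_le _) (Finset.mem_range.mpr h0h)
      have h6 := hgpos (L 0)
      omega
    refine ⟨n, hNn, ?_⟩
    rintro ⟨f, hfm, hfsum⟩
    have hfmem : ∀ j, f j ∈ ⋃ i, AG g (W i) := fun j => (hfm j).1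
    have hfne : ∀ j, f j ≠ a := fun j => by
      have := (hfm j).2
      simpa using this
    obtain ⟨j, hj⟩ := norep hg hh hpow ht2 W hW2 hW3 i0 F x hFne hFW hxb ι hι_ne hι_surj
      K L hwin hLt hbase hsep a P n haval hP hn f hfmem hfsum
    exact hfne j hj
  constructor
  · by_contra hfin
    rw [Set.not_infinite] at hfin
    obtain ⟨b, hb⟩ := hfin.bddAbove
    obtain ⟨n, hn1, hn2⟩ := key b
    have hmem : n ∈ {n : ℕ | 0 < n ∧ ¬ IsSumOf ((⋃ i, AG g (W i)) \ {a}) h n} :=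
      ⟨by omega, hn2⟩
    have := hb hmem
    omega
  · rintro ⟨Nb, hNb⟩
    obtain ⟨n, hn1, hn2⟩ := key Nb
    exact hn2 (hNb n (by omega))
end
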